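/- Let H ∈ (0,1/2) and μ(k) = ∫₀¹ ∫_k^{k+1} ⟨1_{[k,v']}, 1_{[0,v]}⟩_H dv' dv as above. Then |μ(k)| ≤ K·ρ(k)^{2H−2} for some constant K and all k ∈ ℤ, where ρ(k) = max(|k|,1); consequently the series c_H = Σ_{k ∈ ℤ} μ(k) converges absolutely. -/

import Mathlib

open Set
open scoped Interval

/-- The covariance `E[(x_b − x_a)(x_d − x_c)]` of increments of a fBm with Hurst
parameter `H`. -/
noncomputable def fbmCov (H a b c d : ℝ) : ℝ :=
  (|b - c| ^ (2 * H) + |a - d| ^ (2 * H) - |b - d| ^ (2 * H) - |a - c| ^ (2 * H)) / 2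

/-- `μ(m) = ∫₀¹ ∫_m^{m+1} ⟨1_[m,v'], 1_[0,v]⟩_H dv' dv`, extended to `m ∈ ℤ`. -/
noncomputable def muH (H : ℝ) (m : ℤ) : ℝ :=
  ∫ v in (0 : ℝ)..1, ∫ v' in (m : ℝ)..((m : ℝ) + 1), fbmCov H (m : ℝ) v' 0 v

/-- MVT bound for `s ↦ s^(2H-1)` on `[p,q]` with `1 ≤ p`. -/
lemma rpow_diff_le (H : ℝ) (hH0 : 0 < H) (hH1 : H < 1 / 2) {p q : ℝ}
    (hp : 1 ≤ p) (hpq : p ≤ q) :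
    |q ^ (2 * H - 1) - p ^ (2 * H - 1)| ≤ (q - p) * p ^ (2 * H - 2) := by
  have hp0 : (0 : ℝ) < p := lt_of_lt_of_le one_pos hp
  have hder : ∀ x ∈ Icc p q,
      HasDerivWithinAt (fun s : ℝ => s ^ (2 * H - 1))
        ((2 * H - 1) * x ^ (2 * H - 2)) (Icc p q) x := by
    intro x hx
    have hx0 : x ≠ 0 := (hp0.trans_le hx.1).ne'
    have := (Real.hasDerivAt_rpow_const (p := 2 * H - 1) (Or.inl hx0)).hasDerivWithinAt
      (s := Icc p q)
    rw [show 2 * H - 2 = 2 * H - 1 - 1 by ring]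
    exact this
  have hbound : ∀ x ∈ Icc p q, ‖(2 * H - 1) * x ^ (2 * H - 2)‖ ≤ p ^ (2 * H - 2) := by
    intro x hx
    have hxp : p ^ (2 * H - 2) ≥ x ^ (2 * H - 2) :=
      Real.rpow_le_rpow_of_nonpos hp0 hx.1 (by linarith)
    have hx0 : (0 : ℝ) ≤ x ^ (2 * H - 2) := Real.rpow_nonneg (by linarith [hx.1]) _
    have h1 : |2 * H - 1| ≤ 1 := by rw [abs_le]; constructor <;> linarith
    calc ‖(2 * H - 1) * x ^ (2 * H - 2)‖ = |2 * H - 1| * x ^ (2 * H - 2) := by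
          rw [norm_mul, Real.norm_eq_abs, Real.norm_eq_abs, abs_of_nonneg hx0]
      _ ≤ 1 * p ^ (2 * H - 2) := by
          apply mul_le_mul h1 hxp hx0 zero_le_one
      _ = p ^ (2 * H - 2) := one_mul _
  have := (convex_Icc p q).norm_image_sub_le_of_norm_hasDerivWithin_le hder hbound
    (left_mem_Icc.mpr hpq) (right_mem_Icc.mpr hpq)
  calc |q ^ (2 * H - 1) - p ^ (2 * H - 1)| ≤ p ^ (2 * H - 2) * ‖q - p‖ := this
    _ = (q - p) * p ^ (2 * H - 2) := by
        rw [Real.norm_eq_abs, abs_of_nonneg (by linarith)]; ring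

/-- Core second-difference bound. -/
lemma core_bound (H : ℝ) (hH0 : 0 < H) (hH1 : H < 1 / 2) {v a b : ℝ}
    (hv0 : 0 ≤ v) (hv1 : v ≤ 1) (hav : 1 ≤ a - v) (hab : a ≤ b) (hba : b ≤ a + 1) :
    |(b ^ (2 * H) - (b - v) ^ (2 * H)) - (a ^ (2 * H) - (a - v) ^ (2 * H))|
      ≤ (a - v) ^ (2 * H - 2) := by
  have hav0 : (0 : ℝ) < a - v := lt_of_lt_of_le one_pos hav
  have hC0 : (0 : ℝ) ≤ (a - v) ^ (2 * H - 2) := Real.rpow_nonneg hav0.le _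
  have hder : ∀ x ∈ Icc a b,
      HasDerivWithinAt (fun t : ℝ => t ^ (2 * H) - (t - v) ^ (2 * H))
        (2 * H * x ^ (2 * H - 1) - 2 * H * (x - v) ^ (2 * H - 1)) (Icc a b) x := by
    intro x hx
    have hx0 : x ≠ 0 := by nlinarith [hx.1]
    have hxv0 : x - v ≠ 0 := by nlinarith [hx.1]
    have h1 : HasDerivAt (fun t : ℝ => t ^ (2 * H)) (2 * H * x ^ (2 * H - 1)) x :=
      Real.hasDerivAt_rpow_const (Or.inl hx0)
    have h2' : HasDerivAt (fun t : ℝ => t - v) 1 x := (hasDerivAt_id x).sub_const v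
    have h2 : HasDerivAt (fun t : ℝ => (t - v) ^ (2 * H))
        (2 * H * (x - v) ^ (2 * H - 1)) x := by
      have := (Real.hasDerivAt_rpow_const (p := 2 * H) (Or.inl hxv0)).comp x h2'
      rw [mul_one] at this
      exact this
    exact (h1.sub h2).hasDerivWithinAt
  have hbound : ∀ x ∈ Icc a b,
      ‖2 * H * x ^ (2 * H - 1) - 2 * H * (x - v) ^ (2 * H - 1)‖
        ≤ (a - v) ^ (2 * H - 2) := by
    intro x hx
    have hxv1 : 1 ≤ x - v := by linarith [hx.1]
    have hxvx : x - v ≤ x := by linarith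
    have h1 : |x ^ (2 * H - 1) - (x - v) ^ (2 * H - 1)| ≤ v * (x - v) ^ (2 * H - 2) := by
      have := rpow_diff_le H hH0 hH1 hxv1 hxvx
      calc |x ^ (2 * H - 1) - (x - v) ^ (2 * H - 1)|
          ≤ (x - (x - v)) * (x - v) ^ (2 * H - 2) := this
        _ = v * (x - v) ^ (2 * H - 2) := by ring_nf
    have h2 : (x - v) ^ (2 * H - 2) ≤ (a - v) ^ (2 * H - 2) :=
      Real.rpow_le_rpow_of_nonpos hav0 (by linarith [hx.1]) (by linarith)
    have hxvnn : (0 : ℝ) ≤ (x - v) ^ (2 * H - 2) := Real.rpow_nonneg (by linarith) _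
    have h2H : 0 ≤ 2 * H := by linarith
    calc ‖2 * H * x ^ (2 * H - 1) - 2 * H * (x - v) ^ (2 * H - 1)‖
        = 2 * H * |x ^ (2 * H - 1) - (x - v) ^ (2 * H - 1)| := by
          rw [← mul_sub, Real.norm_eq_abs, abs_mul, abs_of_nonneg h2H]
      _ ≤ 2 * H * (v * (x - v) ^ (2 * H - 2)) := mul_le_mul_of_nonneg_left h1 h2H
      _ ≤ 1 * (1 * (a - v) ^ (2 * H - 2)) := by
          apply mul_le_mul (by linarith) ?_ (by positivity) zero_le_one
          apply mul_le_mul hv1 h2 hxvnn zero_le_one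
      _ = (a - v) ^ (2 * H - 2) := by ring
  have := (convex_Icc a b).norm_image_sub_le_of_norm_hasDerivWithin_le hder hbound
    (left_mem_Icc.mpr hab) (right_mem_Icc.mpr hab)
  calc |(b ^ (2 * H) - (b - v) ^ (2 * H)) - (a ^ (2 * H) - (a - v) ^ (2 * H))|
      ≤ (a - v) ^ (2 * H - 2) * ‖b - a‖ := this
    _ ≤ (a - v) ^ (2 * H - 2) * 1 := by
        apply mul_le_mul_of_nonneg_left _ hC0
        rw [Real.norm_eq_abs, abs_of_nonneg (by linarith)]; linarith
    _ = (a - v) ^ (2 * H - 2) := mul_one _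

/-- antitone step: if `2 ≤ M` and `M/2 ≤ x` then `x^(2H-2) ≤ 4*M^(2H-2)`. -/
lemma half_rpow_bound (H : ℝ) (hH0 : 0 < H) (hH1 : H < 1 / 2) {M x : ℝ}
    (hM : 2 ≤ M) (hx : M / 2 ≤ x) :
    x ^ (2 * H - 2) ≤ 4 * M ^ (2 * H - 2) := by
  have hM0 : (0 : ℝ) < M := by linarith
  have h1 : x ^ (2 * H - 2) ≤ (M / 2) ^ (2 * H - 2) :=
    Real.rpow_le_rpow_of_nonpos (by linarith) hx (by linarith)
  have h2 : (M / 2) ^ (2 * H - 2) = M ^ (2 * H - 2) / (2 : ℝ) ^ (2 * H - 2) :=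
    Real.div_rpow hM0.le (by norm_num : (0:ℝ) ≤ 2) _
  have h3 : ((2 : ℝ) ^ (2 * H - 2))⁻¹ = (2 : ℝ) ^ (2 - 2 * H) := by
    rw [← Real.rpow_neg (by norm_num)]; ring_nf
  have h4 : (2 : ℝ) ^ (2 - 2 * H) ≤ 4 := by
    have : (2 : ℝ) ^ (2 - 2 * H) ≤ (2 : ℝ) ^ (2 : ℝ) :=
      Real.rpow_le_rpow_of_exponent_le one_le_two (by linarith)
    have h42 : (2 : ℝ) ^ (2 : ℝ) = 4 := by
      rw [show (2 : ℝ) = ((2 : ℕ) : ℝ) from by norm_num, Real.rpow_natCast]; norm_num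
    linarith
  have hMnn : (0 : ℝ) ≤ M ^ (2 * H - 2) := Real.rpow_nonneg hM0.le _
  calc x ^ (2 * H - 2) ≤ M ^ (2 * H - 2) / (2 : ℝ) ^ (2 * H - 2) := by rw [← h2]; exact h1
    _ = M ^ (2 * H - 2) * (2 : ℝ) ^ (2 - 2 * H) := by rw [div_eq_mul_inv, h3]
    _ ≤ M ^ (2 * H - 2) * 4 := mul_le_mul_of_nonneg_left h4 hMnn
    _ = 4 * M ^ (2 * H - 2) := by ring

lemma fbmCov_bound_large (H : ℝ) (hH0 : 0 < H) (hH1 : H < 1 / 2) {m : ℤ}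
    (hm : 2 ≤ |(m : ℝ)|) {v v' : ℝ} (hv : v ∈ Ioc (0 : ℝ) 1)
    (hv' : v' ∈ Ioc ((m : ℝ)) ((m : ℝ) + 1)) :
    |fbmCov H (m : ℝ) v' 0 v| ≤ 2 * |(m : ℝ)| ^ (2 * H - 2) := by
  obtain ⟨hv0, hv1⟩ := hv
  obtain ⟨hv'1, hv'2⟩ := hv'
  have habs : (2 : ℝ) ≤ (m : ℝ) ∨ (m : ℝ) ≤ -2 := by
    rcases abs_cases (m : ℝ) with ⟨h, _⟩ | ⟨h, _⟩
    · left; linarith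
    · right; linarith
  rcases habs with hpos | hneg
  · have key := core_bound H hH0 hH1 (v := v) (a := (m : ℝ)) (b := v')
      hv0.le hv1 (by linarith) hv'1.le hv'2
    have e1 : |v' - 0| = v' := by rw [sub_zero, abs_of_pos (by linarith)]
    have e2 : |(m : ℝ) - v| = (m : ℝ) - v := abs_of_pos (by linarith)
    have e3 : |v' - v| = v' - v := abs_of_pos (by linarith)
    have e4 : |(m : ℝ) - 0| = (m : ℝ) := by rw [sub_zero, abs_of_pos (by linarith)]
    have efb : fbmCov H (m : ℝ) v' 0 v =
        ((v' ^ (2 * H) - (v' - v) ^ (2 * H))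
          - ((m : ℝ) ^ (2 * H) - ((m : ℝ) - v) ^ (2 * H))) / 2 := by
      rw [fbmCov, e1, e2, e3, e4]; ring
    have hhalf : ((m : ℝ) - v) ^ (2 * H - 2) ≤ 4 * |(m : ℝ)| ^ (2 * H - 2) := by
      have : |(m : ℝ)| = (m : ℝ) := abs_of_pos (by linarith)
      rw [this]
      exact half_rpow_bound H hH0 hH1 (by linarith) (by linarith)
    rw [efb, abs_div]
    have : |((v' ^ (2 * H) - (v' - v) ^ (2 * H))
        - ((m : ℝ) ^ (2 * H) - ((m : ℝ) - v) ^ (2 * H)))|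
        ≤ 4 * |(m : ℝ)| ^ (2 * H - 2) := le_trans key hhalf
    rw [abs_of_pos (by norm_num : (0:ℝ) < 2)]
    linarith
  · have hv'neg : v' ≤ -1 := by linarith
    have key := core_bound H hH0 hH1 (v := v) (a := v - v') (b := v - (m : ℝ))
      hv0.le hv1 (by linarith) (by linarith) (by linarith)
    have e1 : |v' - 0| = (v - v') - v := by
      rw [sub_zero, abs_of_neg (by linarith)]; ring
    have e2 : |(m : ℝ) - v| = v - (m : ℝ) := abs_of_neg (by linarith) |>.trans (by ring)
    have e3 : |v' - v| = v - v' := abs_of_neg (by linarith) |>.trans (by ring)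
    have e4 : |(m : ℝ) - 0| = (v - (m : ℝ)) - v := by
      rw [sub_zero, abs_of_neg (by linarith)]; ring
    have efb : fbmCov H (m : ℝ) v' 0 v =
        (((v - (m : ℝ)) ^ (2 * H) - ((v - (m : ℝ)) - v) ^ (2 * H))
          - ((v - v') ^ (2 * H) - ((v - v') - v) ^ (2 * H))) / 2 := by
      rw [fbmCov, e1, e2, e3, e4]; ring
    have hhalf : ((v - v') - v) ^ (2 * H - 2) ≤ 4 * |(m : ℝ)| ^ (2 * H - 2) := by
      have hmabs : |(m : ℝ)| = -(m : ℝ) := abs_of_neg (by linarith)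
      rw [hmabs]
      have : ((v - v') - v) = -v' := by ring
      rw [this]
      exact half_rpow_bound H hH0 hH1 (by linarith) (by linarith)
    rw [efb, abs_div]
    rw [abs_of_pos (by norm_num : (0:ℝ) < 2)]
    linarith

/-- crude bound for small `m`. -/
lemma fbmCov_bound_small (H : ℝ) (hH0 : 0 < H) (hH1 : H < 1 / 2) {m : ℤ}
    (hm : |(m : ℝ)| ≤ 1) {v v' : ℝ} (hv : v ∈ Ioc (0 : ℝ) 1)
    (hv' : v' ∈ Ioc ((m : ℝ)) ((m : ℝ) + 1)) :
    |fbmCov H (m : ℝ) v' 0 v| ≤ 6 := by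
  obtain ⟨hv0, hv1⟩ := hv
  obtain ⟨hv'1, hv'2⟩ := hv'
  have hmlb : (-1 : ℝ) ≤ (m : ℝ) := by cases abs_le.mp hm; assumption
  have hmub : (m : ℝ) ≤ 1 := (abs_le.mp hm).2
  have key : ∀ x : ℝ, |x| ≤ 3 → |x| ^ (2 * H) ≤ 3 := by
    intro x hx
    calc |x| ^ (2 * H) ≤ (3 : ℝ) ^ (2 * H) :=
          Real.rpow_le_rpow (abs_nonneg x) hx (by linarith)
      _ ≤ (3 : ℝ) ^ (1 : ℝ) :=
          Real.rpow_le_rpow_of_exponent_le (by norm_num) (by linarith)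
      _ = 3 := Real.rpow_one 3
  have b1 := key (v' - 0) (by rw [abs_le]; constructor <;> linarith)
  have b2 := key ((m : ℝ) - v) (by rw [abs_le]; constructor <;> linarith)
  have b3 := key (v' - v) (by rw [abs_le]; constructor <;> linarith)
  have b4 := key ((m : ℝ) - 0) (by rw [abs_le]; constructor <;> linarith)
  have n1 : (0:ℝ) ≤ |v' - 0| ^ (2 * H) := Real.rpow_nonneg (abs_nonneg _) _
  have n2 : (0:ℝ) ≤ |(m : ℝ) - v| ^ (2 * H) := Real.rpow_nonneg (abs_nonneg _) _
  have n3 : (0:ℝ) ≤ |v' - v| ^ (2 * H) := Real.rpow_nonneg (abs_nonneg _) _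
  have n4 : (0:ℝ) ≤ |(m : ℝ) - 0| ^ (2 * H) := Real.rpow_nonneg (abs_nonneg _) _
  rw [fbmCov, abs_div, abs_of_pos (by norm_num : (0:ℝ) < 2)]
  rw [div_le_iff₀ (by norm_num : (0:ℝ) < 2)]
  calc |(|v' - 0| ^ (2 * H) + |(m : ℝ) - v| ^ (2 * H) - |v' - v| ^ (2 * H)
        - |(m : ℝ) - 0| ^ (2 * H))| ≤ 12 := by
        rw [abs_le]; constructor <;> linarith
    _ = 6 * 2 := by norm_num

lemma muH_bound (H : ℝ) (hH0 : 0 < H) (hH1 : H < 1 / 2) (m : ℤ) :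
    |muH H m| ≤ 6 * (max |(m : ℝ)| 1) ^ (2 * H - 2) := by
  have hIoc1 : Ι (0 : ℝ) 1 = Ioc (0 : ℝ) 1 := uIoc_of_le (by norm_num)
  have hIoc2 : Ι ((m : ℝ)) ((m : ℝ) + 1) = Ioc ((m : ℝ)) ((m : ℝ) + 1) :=
    uIoc_of_le (by linarith)
  by_cases hm : 2 ≤ |(m : ℝ)|
  · have hmax : max |(m : ℝ)| 1 = |(m : ℝ)| := max_eq_left (by linarith)
    have hC : (0:ℝ) ≤ 2 * |(m : ℝ)| ^ (2 * H - 2) := by positivity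
    have inner : ∀ v ∈ Ι (0:ℝ) 1,
        ‖∫ v' in (m : ℝ)..((m : ℝ) + 1), fbmCov H (m : ℝ) v' 0 v‖
          ≤ 2 * |(m : ℝ)| ^ (2 * H - 2) := by
      intro v hvmem
      rw [hIoc1] at hvmem
      have := intervalIntegral.norm_integral_le_of_norm_le_const
        (C := 2 * |(m : ℝ)| ^ (2 * H - 2)) (a := (m : ℝ)) (b := (m : ℝ) + 1)
        (f := fun v' => fbmCov H (m : ℝ) v' 0 v) ?_
      · simpa using this
      · intro v' hv'mem
        rw [hIoc2] at hv'mem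
        simpa [Real.norm_eq_abs] using fbmCov_bound_large H hH0 hH1 hm hvmem hv'mem
    have := intervalIntegral.norm_integral_le_of_norm_le_const
      (C := 2 * |(m : ℝ)| ^ (2 * H - 2)) (a := (0:ℝ)) (b := 1)
      (f := fun v => ∫ v' in (m : ℝ)..((m : ℝ) + 1), fbmCov H (m : ℝ) v' 0 v) inner
    rw [hmax]
    have h1 : |muH H m| ≤ 2 * |(m : ℝ)| ^ (2 * H - 2) := by
      simpa [muH, Real.norm_eq_abs] using this
    nlinarith [Real.rpow_nonneg (abs_nonneg (m:ℝ)) (2 * H - 2)]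
  · push_neg at hm
    have hm1 : |(m : ℝ)| ≤ 1 := by
      have h2 : ¬ (2:ℤ) ≤ |m| := by
        intro h
        apply absurd hm
        push_neg
        calc (2:ℝ) = ((2:ℤ):ℝ) := by norm_num
          _ ≤ ((|m|:ℤ):ℝ) := by exact_mod_cast h
          _ = |(m:ℝ)| := by push_cast; ring
      push_neg at h2
      have h3 : |m| ≤ 1 := by omega
      calc |(m:ℝ)| = ((|m|:ℤ):ℝ) := by push_cast; ring
        _ ≤ 1 := by exact_mod_cast h3
    have hmax : max |(m : ℝ)| 1 = 1 := max_eq_right hm1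
    rw [hmax, Real.one_rpow, mul_one]
    have inner : ∀ v ∈ Ι (0:ℝ) 1,
        ‖∫ v' in (m : ℝ)..((m : ℝ) + 1), fbmCov H (m : ℝ) v' 0 v‖ ≤ 6 := by
      intro v hvmem
      rw [hIoc1] at hvmem
      have := intervalIntegral.norm_integral_le_of_norm_le_const
        (C := 6) (a := (m : ℝ)) (b := (m : ℝ) + 1)
        (f := fun v' => fbmCov H (m : ℝ) v' 0 v) ?_
      · simpa using this
      · intro v' hv'mem
        rw [hIoc2] at hv'mem
        simpa [Real.norm_eq_abs] using fbmCov_bound_small H hH0 hH1 hm1 hvmem hv'mem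
    have := intervalIntegral.norm_integral_le_of_norm_le_const
      (C := 6) (a := (0:ℝ)) (b := 1)
      (f := fun v => ∫ v' in (m : ℝ)..((m : ℝ) + 1), fbmCov H (m : ℝ) v' 0 v) inner
    simpa [muH, Real.norm_eq_abs] using this

/-- `|μ(k)| ≤ K·ρ(k)^{2H−2}` with `ρ(k) = max(|k|,1)`; consequently
the series `c_H = Σ_{k∈ℤ} μ(k)` converges absolutely. -/
theorem muH_bound_and_summable (H : ℝ) (hH0 : 0 < H) (hH1 : H < 1 / 2) :
    (∃ K > 0, ∀ m : ℤ,
      |muH H m| ≤ K * (max |(m : ℝ)| 1) ^ (2 * H - 2)) ∧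
    Summable (fun m : ℤ => |muH H m|) := by
  have hbound := muH_bound H hH0 hH1
  constructor
  · exact ⟨6, by norm_num, hbound⟩
  · have hsum0 : Summable fun n : ℤ => |(n : ℝ)| ^ (2 * H - 2) := by
      have := Real.summable_abs_int_rpow (b := 2 - 2 * H) (by linarith)
      convert this using 2 with n
      ring_nf
    have hsum1 : Summable (Function.update (fun n : ℤ => |(n : ℝ)| ^ (2 * H - 2)) 0 1) :=
      hsum0.update 0 1
    have hsum2 : Summable fun n : ℤ => (max |(n : ℝ)| 1) ^ (2 * H - 2) := by
      apply hsum1.congr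
      intro n
      by_cases hn : n = 0
      · subst hn
        simp [Function.update_self, Real.one_rpow]
      · rw [Function.update_of_ne hn]
        have : (1 : ℝ) ≤ |(n : ℝ)| := by
          rw [← Int.cast_abs]
          exact_mod_cast Int.one_le_abs hn
        rw [max_eq_left this]
    have hsum3 : Summable fun n : ℤ => 6 * (max |(n : ℝ)| 1) ^ (2 * H - 2) :=
      hsum2.mul_left 6
    exact Summable.of_nonneg_of_le (fun n => abs_nonneg _) hbound hsum3
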